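/- Specialization of the parametric normal form at the true root and dual coefficients recovers the dual basis evaluations: N_{ξ,ν}(p) = (Λ_0(p), Λ_1(p), ..., Λ_{δ−1}(p))^t for every p ∈ ℂ[x], where Λ_0,...,Λ_{δ−1} is the orthogonal dual basis of the m_ξ-primary component Q. -/

import Mathlib

open MvPolynomial

/-- Iterated partial derivative `∂^β` on multivariate polynomials. -/
noncomputable def pd {n : ℕ} {K : Type*} [CommSemiring K] (β : Fin n → ℕ) :
    Module.End K (MvPolynomial (Fin n) K) :=
  (List.ofFn fun i : Fin n =>
    ((MvPolynomial.pderiv i).toLinearMap : Module.End K (MvPolynomial (Fin n) K)) ^ (β i)).prod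

/-- The linear functional `∂^β_ξ : p ↦ ∂^β(p)(ξ)`. -/
noncomputable def diffAt {n : ℕ} (ξ : Fin n → ℂ) (β : Fin n → ℕ) :
    Module.Dual ℂ (MvPolynomial (Fin n) ℂ) :=
  (MvPolynomial.aeval ξ).toLinearMap.comp (pd β)

/-- The shifted monomial `(x−ξ)^α`. -/
noncomputable def xm {n : ℕ} (ξ : Fin n → ℂ) (α : Fin n → ℕ) : MvPolynomial (Fin n) ℂ :=
  ∏ i, (X i - C (ξ i)) ^ (α i)

/-- The orthogonal complement `J^⊥` of an ideal in the dual space. -/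
noncomputable def perp {n : ℕ} (J : Ideal (MvPolynomial (Fin n) ℂ)) :
    Submodule ℂ (Module.Dual ℂ (MvPolynomial (Fin n) ℂ)) :=
  (J.restrictScalars ℂ).dualAnnihilator

/-- `M^γ = M_1^{γ_1}···M_n^{γ_n}` (in this fixed order) for a family of matrices. -/
noncomputable def matPow {n δ : ℕ} {R : Type*} [CommRing R]
    (M : Fin n → Matrix (Fin δ) (Fin δ) R) (γ : Fin n → ℕ) : Matrix (Fin δ) (Fin δ) R :=
  (List.ofFn fun i : Fin n => (M i) ^ (γ i)).prod

lemma pderiv_pow_monomial {n : ℕ} (i : Fin n) (b : ℕ) (s : Fin n →₀ ℕ) (a : ℂ) :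
    (((pderiv i).toLinearMap : Module.End ℂ (MvPolynomial (Fin n) ℂ)) ^ b) (monomial s a)
      = monomial (s - Finsupp.single i b) (a * ((s i).descFactorial b : ℕ)) := by
  induction b with
  | zero => simp
  | succ b ih =>
      rw [pow_succ', Module.End.mul_apply, ih]
      show pderiv i _ = _
      rw [pderiv_monomial]
      have he : (s - Finsupp.single i b) - Finsupp.single i 1 = s - Finsupp.single i (b+1) := by
        rw [tsub_tsub, ← Finsupp.single_add]
      have h1 : (s - Finsupp.single i b) i = s i - b := by simp
      rw [he, h1, Nat.descFactorial_succ]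
      congr 1
      push_cast
      ring

lemma sum_single_apply_of_not_mem {n : ℕ} (β : Fin n → ℕ) (t : List (Fin n)) (i : Fin n)
    (hit : i ∉ t) : ((t.map fun j => Finsupp.single j (β j)).sum) i = 0 := by
  induction t with
  | nil => simp
  | cons j u ihu =>
      have hij : i ≠ j := fun h => hit (h ▸ List.mem_cons_self)
      simp only [List.map_cons, List.sum_cons, Finsupp.add_apply, Finsupp.single_apply]
      rw [if_neg (Ne.symm hij), zero_add]
      exact ihu fun h => hit (List.mem_cons_of_mem _ h)

lemma pd_list_monomial {n : ℕ} (β : Fin n → ℕ) (l : List (Fin n)) (hl : l.Nodup)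
    (s : Fin n →₀ ℕ) (a : ℂ) :
    ((l.map fun i => ((pderiv i).toLinearMap : Module.End ℂ (MvPolynomial (Fin n) ℂ)) ^ (β i)).prod)
        (monomial s a)
      = monomial (s - (l.map fun i => Finsupp.single i (β i)).sum)
          (a * (((l.map fun i => (s i).descFactorial (β i)).prod : ℕ) : ℂ)) := by
  induction l with
  | nil => simp
  | cons i t ih =>
      have hit : i ∉ t := (List.nodup_cons.mp hl).1
      have ht : t.Nodup := (List.nodup_cons.mp hl).2
      simp only [List.map_cons, List.prod_cons, Module.End.mul_apply, ih ht, List.sum_cons,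
        pderiv_pow_monomial]
      have h1 : (s - (t.map fun j => Finsupp.single j (β j)).sum) i = s i := by
        simp [sum_single_apply_of_not_mem β t i hit]
      rw [h1, tsub_tsub]
      congr 1
      · rw [add_comm]
      · push_cast
        ring

lemma pd_monomial {n : ℕ} (β : Fin n → ℕ) (s : Fin n →₀ ℕ) (a : ℂ) :
    pd β (monomial s a)
      = monomial (s - Finsupp.equivFunOnFinite.symm β)
          (a * ((∏ i, (s i).descFactorial (β i) : ℕ) : ℂ)) := by
  classical
  have h := pd_list_monomial β (List.finRange n) (List.nodup_finRange n) s a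
  have hs : (List.map (fun i => Finsupp.single i (β i)) (List.finRange n)).sum
      = Finsupp.equivFunOnFinite.symm β := by
    rw [← List.ofFn_eq_map, List.sum_ofFn]
    ext j
    simp [Finsupp.finset_sum_apply, Finsupp.single_apply]
  have hp : (List.map (fun i => (s i).descFactorial (β i)) (List.finRange n)).prod
      = ∏ i, (s i).descFactorial (β i) := by
    rw [← List.ofFn_eq_map, List.prod_ofFn]
  rw [pd, List.ofFn_eq_map, h, hs, hp]


noncomputable def sh {n : ℕ} (ξ : Fin n → ℂ) :
    MvPolynomial (Fin n) ℂ →ₐ[ℂ] MvPolynomial (Fin n) ℂ :=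
  aeval fun i => X i - C (ξ i)

lemma pderiv_sh {n : ℕ} (ξ : Fin n → ℂ) (j : Fin n) (p : MvPolynomial (Fin n) ℂ) :
    pderiv j (sh ξ p) = sh ξ (pderiv j p) := by
  have hX : ∀ i, pderiv j (sh ξ (X i)) = sh ξ (pderiv j (X i)) := by
    intro i
    by_cases hij : j = i <;> simp [sh, hij, pderiv_X, Pi.single_apply]
  induction p using MvPolynomial.induction_on with
  | C a => simp [sh]
  | add p q hp hq => simp [map_add, hp, hq]
  | mul_X p i hp =>
      rw [map_mul, pderiv_mul, pderiv_mul, map_add, map_mul, map_mul, hp, hX]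

lemma pderiv_pow_sh {n : ℕ} (ξ : Fin n → ℂ) (j : Fin n) (b : ℕ) (p : MvPolynomial (Fin n) ℂ) :
    (((pderiv j).toLinearMap : Module.End ℂ (MvPolynomial (Fin n) ℂ)) ^ b) (sh ξ p)
      = sh ξ ((((pderiv j).toLinearMap : Module.End ℂ (MvPolynomial (Fin n) ℂ)) ^ b) p) := by
  induction b generalizing p with
  | zero => simp
  | succ b ih =>
      rw [pow_succ, Module.End.mul_apply, Module.End.mul_apply]
      show _ = sh ξ ((_ : Module.End ℂ _) (pderiv j p))
      rw [show ((pderiv j).toLinearMap : Module.End ℂ (MvPolynomial (Fin n) ℂ)) (sh ξ p)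
            = sh ξ (pderiv j p) from pderiv_sh ξ j p, ih (pderiv j p)]

lemma pd_sh {n : ℕ} (ξ : Fin n → ℂ) (β : Fin n → ℕ) (p : MvPolynomial (Fin n) ℂ) :
    pd β (sh ξ p) = sh ξ (pd β p) := by
  suffices h : ∀ l : List (Fin n), ∀ q : MvPolynomial (Fin n) ℂ,
      ((l.map fun i => ((pderiv i).toLinearMap : Module.End ℂ (MvPolynomial (Fin n) ℂ)) ^ (β i)).prod)
        (sh ξ q)
      = sh ξ (((l.map fun i => ((pderiv i).toLinearMap : Module.End ℂ (MvPolynomial (Fin n) ℂ)) ^ (β i)).prod) q) by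
    rw [pd, List.ofFn_eq_map]; exact h _ p
  intro l
  induction l with
  | nil => intro q; simp
  | cons i t ih =>
      intro q
      simp only [List.map_cons, List.prod_cons, Module.End.mul_apply, ih q, pderiv_pow_sh]

lemma eval_sh {n : ℕ} (ξ : Fin n → ℂ) (p : MvPolynomial (Fin n) ℂ) :
    eval ξ (sh ξ p) = eval (0 : Fin n → ℂ) p := by
  induction p using MvPolynomial.induction_on with
  | C a => simp [sh]
  | add p q hp hq => simp [map_add, hp, hq]
  | mul_X p i hp => simp [map_mul, hp, sh]

lemma xm_eq_sh_monomial {n : ℕ} (ξ : Fin n → ℂ) (γ : Fin n → ℕ) :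
    xm ξ γ = sh ξ (monomial (Finsupp.equivFunOnFinite.symm γ) 1) := by
  classical
  have h1 : (monomial (Finsupp.equivFunOnFinite.symm γ) (1 : ℂ)) = ∏ i, X i ^ (γ i) := by
    rw [← prod_X_pow_eq_monomial]
    apply Finset.prod_subset (Finset.subset_univ _)
    intro i _ hi
    have : γ i = 0 := by simpa [Finsupp.equivFunOnFinite] using hi
    simp [this]
  rw [h1, map_prod]
  simp [sh, xm]


lemma aeval_eq_eval'' {n : ℕ} (ξ : Fin n → ℂ) (p : MvPolynomial (Fin n) ℂ) :
    aeval ξ p = eval ξ p := by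
  rw [aeval_def, Algebra.algebraMap_self]; rfl

lemma eval_zero_monomial {n : ℕ} (e : Fin n →₀ ℕ) (c : ℂ) :
    eval (0 : Fin n → ℂ) (monomial e c) = if e = 0 then c else 0 := by
  classical
  rw [eval_monomial]
  simp only [Pi.zero_apply]
  by_cases he : e = 0
  · simp [he]
  · rw [if_neg he]
    obtain ⟨i, hi⟩ : ∃ i, e i ≠ 0 := by
      by_contra h
      push_neg at h
      exact he (Finsupp.ext fun i => h i)
    have : (e.prod fun n k => (0:ℂ) ^ k) = 0 := by
      apply Finset.prod_eq_zero (Finsupp.mem_support_iff.mpr hi)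
      simp [zero_pow hi]
    rw [this, mul_zero]

lemma diffAt_xm {n : ℕ} (ξ : Fin n → ℂ) (β γ : Fin n → ℕ) :
    diffAt ξ β (xm ξ γ) = if β = γ then ((∏ i, (γ i).factorial : ℕ) : ℂ) else 0 := by
  classical
  have : diffAt ξ β (xm ξ γ) = eval (0 : Fin n → ℂ) (pd β (monomial (Finsupp.equivFunOnFinite.symm γ) 1)) := by
    show aeval ξ (pd β (xm ξ γ)) = _
    rw [xm_eq_sh_monomial, pd_sh, aeval_eq_eval'', eval_sh]
  rw [this, pd_monomial, eval_zero_monomial, one_mul]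
  have hsub : (Finsupp.equivFunOnFinite.symm γ - Finsupp.equivFunOnFinite.symm β = 0)
      ↔ ∀ i, γ i ≤ β i := by
    rw [tsub_eq_zero_iff_le]
    constructor
    · intro h i; exact h i
    · intro h i; exact h i
  have happ : ∀ i, (Finsupp.equivFunOnFinite.symm γ) i = γ i := fun _ => rfl
  by_cases hbg : β = γ
  · subst hbg
    rw [if_pos (hsub.mpr fun i => le_refl _), if_pos rfl]
    push_cast
    apply Finset.prod_congr rfl
    intro i _
    rw [happ, Nat.descFactorial_self]
  · rw [if_neg hbg]
    by_cases hle : ∀ i, γ i ≤ β i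
    · rw [if_pos (hsub.mpr hle)]
      obtain ⟨i, hi⟩ : ∃ i, γ i < β i := by
        by_contra h
        push_neg at h
        exact hbg (funext fun i => le_antisymm (h i) (hle i))
      have : (∏ i, ((Finsupp.equivFunOnFinite.symm γ) i).descFactorial (β i)) = 0 := by
        apply Finset.prod_eq_zero (Finset.mem_univ i)
        rw [happ, Nat.descFactorial_eq_zero_iff_lt.mpr hi]
      rw [this]
      simp
    · rw [if_neg]
      intro h
      exact hle (hsub.mp h)


lemma xm_zero {n : ℕ} (ξ : Fin n → ℂ) : xm ξ 0 = 1 := by simp [xm]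

lemma xm_add_single {n : ℕ} (ξ : Fin n → ℂ) (β : Fin n → ℕ) (i : Fin n) :
    xm ξ (β + Pi.single i 1) = xm ξ β * (X i - C (ξ i)) := by
  classical
  unfold xm
  simp only [Pi.add_apply, pow_add, Finset.prod_mul_distrib]
  congr 1
  rw [Finset.prod_eq_single i]
  · simp
  · intro j _ hj; simp [Pi.single_apply, hj]
  · intro h; exact absurd (Finset.mem_univ i) h

/-- Specializing the parametric normal form at the true root `ξ` and true dual
coefficients `ν` (i.e. using the actual multiplication matrices
`(M_i)_{k,l} = Λ_k((x−ξ)^{α_l+e_i})` of `ℂ[x]/Q` in the basis `B`) recovers the dual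
basis evaluations: `N_{ξ,ν}(p) = (Λ_0(p),…,Λ_{δ−1}(p))ᵗ` for every `p`. -/
theorem parametric_normal_form_specialization {n δ : ℕ} (hδ : 0 < δ) (ξ : Fin n → ℂ)
    (Q : Ideal (MvPolynomial (Fin n) ℂ))
    (hprim : Q.IsPrimary)
    (hrad : Q.radical = RingHom.ker (MvPolynomial.eval ξ))
    (o : ℕ) (ho : (RingHom.ker (MvPolynomial.eval ξ)) ^ (o + 1) ≤ Q)
    (α : Fin δ → (Fin n → ℕ)) (hzero : α ⟨0, hδ⟩ = 0)
    (hconn : ∀ k, α k ≠ 0 → ∃ l i, α k = α l + Pi.single i 1)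
    (Λ : Fin δ → Module.Dual ℂ (MvPolynomial (Fin n) ℂ))
    (hperp : ∀ j, Λ j ∈ perp Q)
    (hdual : ∀ j k, Λ j (xm ξ (α k)) = if j = k then 1 else 0)
    (hspan : Submodule.span ℂ (Set.range Λ) = perp Q)
    (horder : ∀ j, Λ j ∈ Submodule.span ℂ
      {L | ∃ β : Fin n → ℕ, (∑ i, β i) ≤ o ∧ L = diffAt ξ β})
    (M : Fin n → Matrix (Fin δ) (Fin δ) ℂ)
    (hM : ∀ i k l, M i k l = Λ k (xm ξ (α l + Pi.single i 1)))
    (p : MvPolynomial (Fin n) ℂ) :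
    (fun k => ∑ γ ∈ Finset.Iic (fun _ : Fin n => o),
      ((∏ i, ((γ i).factorial : ℂ))⁻¹ * MvPolynomial.eval ξ (pd γ p)) *
        matPow M γ k ⟨0, hδ⟩) = fun k => Λ k p := by

  classical
  -- Λ's kill Q
  have hperp' : ∀ j, ∀ q ∈ Q, Λ j q = 0 := fun j q hq =>
    (Submodule.mem_dualAnnihilator _).mp (hperp j) q ((Submodule.restrictScalars_mem ℂ Q q).mpr hq)
  -- reproducing property
  have repro : ∀ r : MvPolynomial (Fin n) ℂ, r - ∑ l, Λ l r • xm ξ (α l) ∈ Q := by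
    intro r
    rw [← Submodule.restrictScalars_mem ℂ,
      ← Subspace.forall_mem_dualAnnihilator_apply_eq_zero_iff]
    intro φ hφ
    have hφ' : φ ∈ Submodule.span ℂ (Set.range Λ) := by rw [hspan]; exact hφ
    clear hφ
    induction hφ' using Submodule.span_induction with
    | mem x hx =>
        obtain ⟨j, rfl⟩ := hx
        simp [map_sub, map_sum, map_smul, smul_eq_mul, hdual, mul_ite, mul_one, mul_zero,
          Finset.sum_ite_eq]
    | zero => simp
    | add x y hx hy ihx ihy => simp [LinearMap.add_apply, ihx, ihy]
    | smul a x hx ihx => simp [LinearMap.smul_apply, ihx]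
  -- one multiplication step
  have hstep : ∀ (i : Fin n) (β : Fin n → ℕ),
      (M i).mulVec (fun k => Λ k (xm ξ β)) = fun k => Λ k (xm ξ (β + Pi.single i 1)) := by
    intro i β
    funext k
    have hq := repro (xm ξ β)
    set s := ∑ l, Λ l (xm ξ β) • xm ξ (α l) with hs
    have h0 : Λ k ((xm ξ β - s) * (X i - C (ξ i))) = 0 :=
      hperp' k _ (Ideal.mul_mem_right _ _ hq)
    have hexp : xm ξ (β + Pi.single i 1)
        = s * (X i - C (ξ i)) + (xm ξ β - s) * (X i - C (ξ i)) := by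
      rw [xm_add_single]; ring
    have hsg : s * (X i - C (ξ i)) = ∑ l, Λ l (xm ξ β) • (xm ξ (α l) * (X i - C (ξ i))) := by
      rw [hs, Finset.sum_mul]
      exact Finset.sum_congr rfl fun l _ => smul_mul_assoc _ _ _
    simp only [Matrix.mulVec, dotProduct]
    rw [hexp, map_add, h0, add_zero, hsg, map_sum]
    apply Finset.sum_congr rfl
    intro l _
    rw [map_smul, smul_eq_mul, hM, xm_add_single, mul_comm]
  -- powers
  have hpow : ∀ (i : Fin n) (b : ℕ) (β : Fin n → ℕ),
      ((M i) ^ b).mulVec (fun k => Λ k (xm ξ β)) = fun k => Λ k (xm ξ (β + Pi.single i b)) := by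
    intro i b
    induction b with
    | zero => intro β; simp [Matrix.one_mulVec]
    | succ b ih =>
        intro β
        rw [pow_succ, ← Matrix.mulVec_mulVec, hstep i β, ih (β + Pi.single i 1)]
        have harg : β + Pi.single i 1 + Pi.single i b = β + Pi.single i (b + 1) := by
          funext j
          simp only [Pi.add_apply, Pi.single_apply]
          split <;> omega
        rw [harg]
  -- list products
  have hlist : ∀ (l : List (Fin n)) (γ : Fin n → ℕ) (β : Fin n → ℕ),
      ((l.map fun i => (M i) ^ (γ i)).prod).mulVec (fun k => Λ k (xm ξ β))
        = fun k => Λ k (xm ξ (β + (l.map fun i => Pi.single i (γ i)).sum)) := by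
    intro l γ
    induction l with
    | nil => intro β; simp [Matrix.one_mulVec]
    | cons i t ih =>
        intro β
        rw [List.map_cons, List.prod_cons, ← Matrix.mulVec_mulVec, ih β, hpow, List.map_cons,
          List.sum_cons]
        have harg : β + (t.map fun i => Pi.single i (γ i)).sum + Pi.single i (γ i)
            = β + (Pi.single i (γ i) + (t.map fun i => Pi.single i (γ i)).sum) := by
          rw [add_assoc, add_comm ((t.map fun i => Pi.single i (γ i)).sum)]
        rw [harg]
  -- column of matPow
  have hcol : ∀ (γ : Fin n → ℕ) (k : Fin δ), matPow M γ k ⟨0, hδ⟩ = Λ k (xm ξ γ) := by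
    intro γ k
    have hv0 : (fun j => Λ j (xm ξ (0 : Fin n → ℕ))) = Pi.single (⟨0, hδ⟩ : Fin δ) (1 : ℂ) := by
      funext j
      rw [← hzero, hdual j ⟨0, hδ⟩, Pi.single_apply]
    have hγ : (((List.finRange n).map fun i => Pi.single i (γ i)).sum : Fin n → ℕ) = γ := by
      rw [← List.ofFn_eq_map, List.sum_ofFn, Finset.univ_sum_single]
    have h1 : (matPow M γ).mulVec (Pi.single (⟨0, hδ⟩ : Fin δ) (1 : ℂ)) k
        = matPow M γ k ⟨0, hδ⟩ := by
      rw [Matrix.mulVec_single]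
      simp
    rw [← h1, ← hv0, matPow, List.ofFn_eq_map, hlist]
    simp only [zero_add, hγ]
  -- step B: express Λ k p via truncated Taylor coefficients
  have hB : ∀ k : Fin δ, Λ k p = ∑ γ ∈ Finset.Iic (fun _ : Fin n => o),
      ((∏ i, ((γ i).factorial : ℂ))⁻¹ * MvPolynomial.eval ξ (pd γ p)) * Λ k (xm ξ γ) := by
    intro k
    suffices key : ∀ L, L ∈ Submodule.span ℂ
        {L | ∃ β : Fin n → ℕ, (∑ i, β i) ≤ o ∧ L = diffAt ξ β} →
        L p = ∑ γ ∈ Finset.Iic (fun _ : Fin n => o),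
          ((∏ i, ((γ i).factorial : ℂ))⁻¹ * MvPolynomial.eval ξ (pd γ p)) * L (xm ξ γ) by
      exact key (Λ k) (horder k)
    intro L hk
    induction hk using Submodule.span_induction with
    | mem L hL =>
        obtain ⟨β, hβo, rfl⟩ := hL
        have hmem : β ∈ Finset.Iic (fun _ : Fin n => o) := by
          rw [Finset.mem_Iic]
          intro i
          exact le_trans (Finset.single_le_sum (fun j _ => Nat.zero_le (β j))
            (Finset.mem_univ i)) hβo
        have hLa : ∀ q, diffAt ξ β q = eval ξ (pd β q) := by
          intro q
          show aeval ξ (pd β q) = _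
          rw [aeval_eq_eval'']
        rw [hLa p, Finset.sum_congr rfl (fun γ _ => by rw [diffAt_xm]), Finset.sum_eq_single β]
        · rw [if_pos rfl]
          have hne : (∏ i, ((β i).factorial : ℂ)) ≠ 0 :=
            Finset.prod_ne_zero_iff.mpr fun i _ => Nat.cast_ne_zero.mpr (Nat.factorial_ne_zero _)
          push_cast
          field_simp
        · intro γ _ hγβ
          rw [if_neg (fun h => hγβ h.symm), mul_zero]
        · intro h; exact absurd hmem h
    | zero => simp
    | add x y hx hy ihx ihy =>
        simp only [LinearMap.add_apply, ihx, ihy, ← Finset.sum_add_distrib]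
        exact Finset.sum_congr rfl fun γ _ => by ring
    | smul a x hx ihx =>
        simp only [LinearMap.smul_apply, smul_eq_mul, ihx, Finset.mul_sum]
        exact Finset.sum_congr rfl fun γ _ => by ring
  funext k
  rw [hB k]
  exact Finset.sum_congr rfl fun γ _ => by rw [hcol]
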